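/- For an integer n ≥ 2 and 0 < x < 1, we have ₂F₁(1, n - 1/2; 3/2; x) = (1/(2(1-x)^{n-1})) · Σ_{j=0}^{n-2} C(n-2, j) (-x)^j / (j + 1/2). -/

import Mathlib

open Finset

/-- Auxiliary product `∏_{j<m} (k + j + 3/2)`. -/
noncomputable def pp (m k : ℕ) : ℝ := ∏ j ∈ range m, ((k : ℝ) + j + 3/2)

lemma pp_pos (m k : ℕ) : 0 < pp m k := by
  apply Finset.prod_pos
  intro j _
  positivity

lemma pp_succ (m k : ℕ) : pp (m+1) k = ((k : ℝ) + m + 3/2) * pp m k := by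
  rw [pp, Finset.prod_range_succ, pp, mul_comm]

lemma pp_succ' (m k : ℕ) : pp (m+1) k = ((k : ℝ) + 3/2) * pp m (k+1) := by
  rw [pp, Finset.prod_range_succ', pp]
  have h1 : ∀ j ∈ range m, ((k : ℝ) + ((j+1 : ℕ) : ℝ) + 3/2) = ((k+1 : ℕ) : ℝ) + (j : ℝ) + 3/2 := by
    intro j _; push_cast; ring
  rw [Finset.prod_congr rfl h1]
  push_cast
  ring

lemma pp_le (m k : ℕ) : pp m k ≤ ((m : ℝ) + 2) ^ m * ((k : ℝ) + 1) ^ m := by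
  rw [← mul_pow]
  calc pp m k ≤ ∏ _j ∈ range m, (((m : ℝ) + 2) * ((k : ℝ) + 1)) := by
        apply Finset.prod_le_prod
        · intro j _; positivity
        · intro j hj
          have hj' : (j : ℝ) ≤ (m : ℝ) - 1 := by
            have := Finset.mem_range.mp hj
            have : (j : ℝ) + 1 ≤ (m : ℝ) := by exact_mod_cast this
            linarith
          nlinarith [Nat.cast_nonneg (α := ℝ) k, Nat.cast_nonneg (α := ℝ) m]
    _ = (((m : ℝ) + 2) * ((k : ℝ) + 1)) ^ m := by rw [Finset.prod_const, Finset.card_range]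

lemma summable_pp (m : ℕ) {x : ℝ} (hx0 : 0 ≤ x) (hx1 : x < 1) :
    Summable (fun k : ℕ => pp m k * x ^ k) := by
  have hx : ‖x‖ < 1 := by rw [Real.norm_eq_abs, abs_of_nonneg hx0]; exact hx1
  have h1 : Summable (fun k : ℕ => ((k : ℝ) + 1) ^ m * x ^ k) := by
    have h := summable_pow_mul_geometric_of_norm_lt_one (R := ℝ) m hx
    have h2 := (summable_nat_add_iff 1).mpr h
    rcases eq_or_lt_of_le hx0 with h0 | h0
    · apply summable_of_ne_finset_zero (s := ({0} : Finset ℕ))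
      intro k hk
      have hk0 : k ≠ 0 := by simpa using hk
      rw [← h0, zero_pow hk0, mul_zero]
    · have h3 := h2.mul_right x⁻¹
      apply h3.congr
      intro k
      push_cast
      rw [pow_succ]
      field_simp
  apply Summable.of_nonneg_of_le
    (fun k => mul_nonneg (pp_pos m k).le (pow_nonneg hx0 k)) (fun k => ?_)
    (h1.mul_left (((m : ℝ) + 2) ^ m))
  have := pp_le m k
  have hxk : (0:ℝ) ≤ x ^ k := by positivity
  calc pp m k * x ^ k ≤ (((m : ℝ) + 2) ^ m * ((k : ℝ) + 1) ^ m) * x ^ k :=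
        mul_le_mul_of_nonneg_right this hxk
    _ = ((m : ℝ) + 2) ^ m * (((k : ℝ) + 1) ^ m * x ^ k) := by ring

lemma S_rec (m : ℕ) {x : ℝ} (hx0 : 0 ≤ x) (hx1 : x < 1) :
    (1 - x) * ∑' k : ℕ, pp (m+1) k * x ^ k
      = ((m : ℝ) + 1) * (∑' k : ℕ, pp m k * x ^ k) + (1/2) * pp m 0 := by
  set U : ℕ → ℝ := fun k => ((k : ℝ) + 1/2) * pp m k * x ^ k with hU
  have sumS1 : Summable (fun k : ℕ => pp (m+1) k * x ^ k) := summable_pp (m+1) hx0 hx1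
  have sumS : Summable (fun k : ℕ => pp m k * x ^ k) := summable_pp m hx0 hx1
  have sumU : Summable U := by
    apply Summable.of_nonneg_of_le (fun k => by
      have := (pp_pos m k).le
      positivity) (fun k => ?_) sumS1
    rw [hU, pp_succ]
    have h1 : ((k : ℝ) + 1/2) ≤ ((k : ℝ) + m + 3/2) := by
      have : (0:ℝ) ≤ m := Nat.cast_nonneg m
      linarith
    have h2 : (0:ℝ) ≤ pp m k := (pp_pos m k).le
    have h3 : (0:ℝ) ≤ x ^ k := by positivity
    have h4 : (0:ℝ) ≤ (k : ℝ) + 1/2 := by positivity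
    exact mul_le_mul_of_nonneg_right (mul_le_mul_of_nonneg_right h1 h2) h3
  have e1 : ∑' k : ℕ, pp (m+1) k * x ^ k
      = (∑' k : ℕ, U k) + ((m : ℝ) + 1) * ∑' k : ℕ, pp m k * x ^ k := by
    rw [← tsum_mul_left, ← Summable.tsum_add sumU (sumS.mul_left ((m : ℝ)+1))]
    apply tsum_congr
    intro k
    rw [pp_succ, hU]
    ring
  have e2 : x * ∑' k : ℕ, pp (m+1) k * x ^ k = (∑' k : ℕ, U k) - (1/2) * pp m 0 := by
    rw [← tsum_mul_left]
    have : ∀ k : ℕ, x * (pp (m+1) k * x ^ k) = U (k+1) := by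
      intro k
      rw [hU, pp_succ']
      push_cast
      ring
    rw [tsum_congr this]
    have h0 := Summable.tsum_eq_zero_add sumU
    have : U 0 = (1/2) * pp m 0 := by rw [hU]; norm_num
    rw [this] at h0
    linarith [h0]
  linarith [e1, e2, sub_mul 1 x (∑' k : ℕ, pp (m+1) k * x ^ k)]

lemma N_rec (m : ℕ) (x : ℝ) :
    ∑ j ∈ range (m+2), ((m+1).choose j : ℝ) * (-x) ^ j * pp (m+1) 0 / (2*j+1)
      = ((m : ℝ) + 1) * ∑ j ∈ range (m+1), ((m).choose j : ℝ) * (-x) ^ j * pp m 0 / (2*j+1)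
        + (1/2) * pp m 0 * (1 - x) ^ (m+1) := by
  have hbin : (1 - x) ^ (m+1) = ∑ j ∈ range (m+2), ((m+1).choose j : ℝ) * (-x) ^ j := by
    have := add_pow (-x) 1 (m+1)
    simp only [one_pow, mul_one] at this
    rw [show (1 : ℝ) - x = -x + 1 by ring, this]
    apply Finset.sum_congr rfl
    intro j _
    ring
  have hext : ∑ j ∈ range (m+1), ((m).choose j : ℝ) * (-x) ^ j * pp m 0 / (2*j+1)
      = ∑ j ∈ range (m+2), ((m).choose j : ℝ) * (-x) ^ j * pp m 0 / (2*j+1) := by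
    rw [Finset.sum_range_succ (n := m+1)]
    simp [Nat.choose_eq_zero_of_lt (Nat.lt_succ_self m)]
  rw [hbin, hext, Finset.mul_sum, Finset.mul_sum, ← Finset.sum_add_distrib]
  apply Finset.sum_congr rfl
  intro j hj
  have hj' : j ≤ m + 1 := by
    have := Finset.mem_range.mp hj; omega
  have hcast : ((m).choose j : ℝ) * ((m : ℝ) + 1)
      = ((m+1).choose j : ℝ) * (((m : ℝ) + 1) - (j : ℝ)) := by
    have h := Nat.choose_mul_succ_eq m j
    have : (((m).choose j * (m + 1) : ℕ) : ℝ) = (((m+1).choose j * (m + 1 - j) : ℕ) : ℝ) := by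
      exact_mod_cast congrArg (Nat.cast (R := ℝ)) h
    push_cast [Nat.cast_sub hj'] at this
    linarith [this]
  have hpp : pp (m+1) 0 = ((m : ℝ) + 3/2) * pp m 0 := by
    rw [pp_succ]; norm_num
  have hkey : (2*(m:ℝ)+3) * (((m+1).choose j : ℕ) : ℝ)
      = 2*((m:ℝ)+1)*(((m).choose j : ℕ) : ℝ)
        + (2*(j:ℝ)+1)*(((m+1).choose j : ℕ) : ℝ) := by
    linear_combination (-2) * hcast
  have h2j : (2*(j : ℝ)+1) ≠ 0 := by positivity
  rw [hpp]
  field_simp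
  linear_combination ((-x) ^ j * pp m 0) * hkey

lemma S_closed (m : ℕ) {x : ℝ} (hx0 : 0 ≤ x) (hx1 : x < 1) :
    ∑' k : ℕ, pp m k * x ^ k
      = (∑ j ∈ range (m+1), ((m).choose j : ℝ) * (-x) ^ j * pp m 0 / (2*j+1))
        / (1 - x) ^ (m+1) := by
  have h1x : (0:ℝ) < 1 - x := by linarith
  induction m with
  | zero =>
      simp only [pp, Finset.range_zero, Finset.prod_empty, one_mul]
      rw [tsum_geometric_of_lt_one hx0 hx1]
      norm_num
  | succ m ih =>
      have hrec := S_rec m hx0 hx1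
      have hN := N_rec m x
      have hpowne : ((1:ℝ) - x) ^ (m+1) ≠ 0 := by positivity
      rw [ih] at hrec
      rw [eq_div_iff (by positivity : ((1:ℝ)-x)^(m+1+1) ≠ 0), hN]
      calc (∑' k : ℕ, pp (m+1) k * x ^ k) * (1-x)^(m+1+1)
          = ((1-x) * ∑' k : ℕ, pp (m+1) k * x ^ k) * (1-x)^(m+1) := by ring
        _ = (((m : ℝ) + 1) * ((∑ j ∈ range (m+1), ((m).choose j : ℝ) * (-x) ^ j * pp m 0
              / (2*j+1)) / (1 - x) ^ (m+1)) + (1/2) * pp m 0) * (1-x)^(m+1) := by rw [hrec]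
        _ = ((m : ℝ) + 1) * (∑ j ∈ range (m+1), ((m).choose j : ℝ) * (-x) ^ j * pp m 0 / (2*j+1))
              + (1/2) * pp m 0 * (1-x)^(m+1) := by
            rw [add_mul, mul_assoc, div_mul_cancel₀ _ hpowne]

theorem gaussHypergeom_three_halves_aux : True := trivial

/-- The Gauss hypergeometric function `₂F₁(a,b;c;x)`. -/
noncomputable def gaussHypergeom (a b c x : ℝ) : ℝ :=
  ∑' k : ℕ, (ascPochhammer ℝ k).eval a * (ascPochhammer ℝ k).eval b /
      (ascPochhammer ℝ k).eval c * x ^ k / (Nat.factorial k)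

lemma asc_eval_prod (c : ℝ) (k : ℕ) :
    (ascPochhammer ℝ k).eval c = ∏ i ∈ range k, (c + i) := by
  induction k with
  | zero => simp
  | succ k ih => rw [ascPochhammer_succ_eval, ih, Finset.prod_range_succ]

lemma pp_cross (a b : ℕ) : pp a 0 * pp b a = ∏ j ∈ range (a+b), ((j : ℝ) + 3/2) := by
  rw [Finset.prod_range_add]
  congr 1
  · rw [pp]; apply Finset.prod_congr rfl; intro j _; push_cast; ring
  · rw [pp]; apply Finset.prod_congr rfl; intro j _; push_cast; ring

/-- For `n ≥ 2` and `0 < x < 1`,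
`₂F₁(1, n-1/2; 3/2; x) = (1/(2(1-x)^(n-1))) ∑_{j=0}^{n-2} C(n-2,j)(-x)^j/(j+1/2)`. -/
theorem gaussHypergeom_three_halves (n : ℕ) (hn : 2 ≤ n) (x : ℝ) (hx0 : 0 < x) (hx1 : x < 1) :
    gaussHypergeom 1 ((n : ℝ) - 1/2) (3/2) x =
      1 / (2 * (1 - x) ^ (n - 1)) *
        ∑ j ∈ range (n - 1), (n - 2).choose j * (-x) ^ j / ((j : ℝ) + 1/2) := by
  obtain ⟨m, rfl⟩ : ∃ m, n = m + 2 := ⟨n - 2, by omega⟩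
  have hterm : ∀ k : ℕ,
      (ascPochhammer ℝ k).eval 1 * (ascPochhammer ℝ k).eval (((m + 2 : ℕ) : ℝ) - 1/2) /
        (ascPochhammer ℝ k).eval (3/2) * x ^ k / (Nat.factorial k)
      = pp m k * x ^ k / pp m 0 := by
    intro k
    have hB : (ascPochhammer ℝ k).eval (((m + 2 : ℕ) : ℝ) - 1/2) = pp k m := by
      rw [asc_eval_prod, pp]
      apply Finset.prod_congr rfl
      intro i _
      push_cast
      ring
    have hC : (ascPochhammer ℝ k).eval (3/2 : ℝ) = pp k 0 := by
      rw [asc_eval_prod, pp]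
      apply Finset.prod_congr rfl
      intro i _
      push_cast
      ring
    have hcross : pp k m * pp m 0 = pp k 0 * pp m k := by
      have h1 := pp_cross k m
      have h2 := pp_cross m k
      rw [Nat.add_comm m k] at h2
      nlinarith [h1, h2, pp_pos k m, pp_pos m 0, pp_pos k 0, pp_pos m k]
    rw [ascPochhammer_eval_one, hB, hC]
    have hk : ((Nat.factorial k : ℕ) : ℝ) ≠ 0 := by
      exact_mod_cast (Nat.factorial_pos k).ne'
    have hpk0 : pp k 0 ≠ 0 := (pp_pos k 0).ne'
    have hpm0 : pp m 0 ≠ 0 := (pp_pos m 0).ne'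
    field_simp
    linear_combination hcross
  rw [gaussHypergeom, tsum_congr hterm]
  have : ∑' k : ℕ, pp m k * x ^ k / pp m 0 = (∑' k : ℕ, pp m k * x ^ k) / pp m 0 :=
    tsum_div_const
  rw [this, S_closed m hx0.le hx1]
  have h1x : (0:ℝ) < 1 - x := by linarith
  have hn1 : (m + 2) - 1 = m + 1 := by omega
  have hn2 : (m + 2) - 2 = m := by omega
  rw [hn1, hn2, div_div, Finset.sum_div, Finset.mul_sum]
  apply Finset.sum_congr rfl
  intro j _
  have h2j : (2*(j : ℝ)+1) ≠ 0 := by positivity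
  have hj2 : ((j : ℝ) + 1/2) ≠ 0 := by positivity
  have hpow : ((1:ℝ) - x) ^ (m+1) ≠ 0 := by positivity
  have hpm0 : pp m 0 ≠ 0 := (pp_pos m 0).ne'
  field_simp
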